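/- Let (X,d) be a complete metric space and f : X → ℝ ∪ {+∞} proper, lower semicontinuous, continuous on its domain, bounded below, with finite global slope on its domain. If {z_n} ⊂ X has no convergent subsequence, 𝒢[f](z_n) > 0 for all n, and ∑_n 𝒢[f](z_n)·d(z_n, z_{n+1}) < +∞, then liminf_{n→∞} f(z_n) = inf f. -/

import Mathlib

open Filter
open scoped ENNReal

/-- The global slope `𝒢[f](x) = sup_{y ≠ x} (f(x) - f(y))⁺ / d(x,y)` for `x ∈ dom f`,
and `+∞` otherwise. -/
noncomputable def globalSlope {X : Type*} [MetricSpace X] (f : X → EReal) (x : X) : ℝ≥0∞ :=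
  if f x = ⊤ then ⊤
  else ⨆ y, ENNReal.ofReal ((max (f x - f y) 0).toReal / dist x y)

/-- Let `X` be complete, `f` proper, lsc, continuous on its domain,
bounded below, with finite global slope on its domain.  If `z` has no convergent
subsequence, `𝒢[f](z n) > 0` and `∑ 𝒢[f](z n) d(z n, z (n+1)) < ∞`, then
`liminf f (z n) = inf f`. -/
theorem stmt3 {X : Type*} [MetricSpace X] [CompleteSpace X] (f : X → EReal)
    (hbot : ∀ x, f x ≠ ⊥) (hproper : ∃ x, f x ≠ ⊤)
    (hlsc : LowerSemicontinuous f)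
    (hcont : ContinuousOn f {x | f x ≠ ⊤})
    (hbdd : ∃ m : ℝ, ∀ x, (m : EReal) ≤ f x)
    (hfin : ∀ x, f x ≠ ⊤ → globalSlope f x ≠ ⊤)
    (z : ℕ → X)
    (hnoconv : ¬ ∃ (φ : ℕ → ℕ) (x : X), StrictMono φ ∧ Tendsto (z ∘ φ) atTop (nhds x))
    (hpos : ∀ n, 0 < globalSlope f (z n))
    (hsum : ∑' n, globalSlope f (z n) * ENNReal.ofReal (dist (z n) (z (n + 1))) ≠ ⊤) :
    liminf (fun n => f (z n)) atTop = ⨅ x, f x := by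
  refine le_antisymm ?_ (le_liminf_of_le (by isBoundedDefault)
    (Eventually.of_forall fun n => iInf_le _ _))
  by_contra hlt
  push_neg at hlt
  obtain ⟨y, hy⟩ := iInf_lt_iff.1 hlt
  obtain ⟨c, hc1, hc2⟩ := EReal.exists_between_coe_real hy
  obtain ⟨c', hc'1, hc'2⟩ := EReal.exists_between_coe_real hc1
  rw [EReal.coe_lt_coe_iff] at hc'2
  obtain ⟨N, hN⟩ := eventually_atTop.1 (eventually_lt_of_lt_liminf hc2)
  set δ : ℝ := c - c' with hδdef
  have hδ : 0 < δ := sub_pos.2 hc'2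
  have hytop : f y ≠ ⊤ := fun h => by simp [h] at hc'1
  set v : ℝ := (f y).toReal with hvdef
  have hv : f y = (v : EReal) := (EReal.coe_toReal hytop (hbot y)).symm
  have hvc' : v < c' := by rwa [hv, EReal.coe_lt_coe_iff] at hc'1
  by_cases hS : Summable (fun n => dist (z n) (z (n + 1)))
  · obtain ⟨x, hx⟩ := cauchySeq_tendsto_of_complete (cauchySeq_of_summable_dist hS)
    exact hnoconv ⟨id, x, strictMono_id, hx⟩
  · set d : ℕ → ℝ := fun n => dist (z n) (z (n + 1)) with hddef
    have hd0 : ∀ n, 0 ≤ d n := fun n => dist_nonneg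
    set S : ℕ → ℝ := fun K => ∑ k ∈ Finset.range K, d (N + k) with hSdef
    have hS0 : ∀ K, 0 ≤ S K := fun K => Finset.sum_nonneg fun k _ => hd0 _
    have hSmono : ∀ K, S K ≤ S (K + 1) := by
      intro K
      rw [show S (K + 1) = S K + d (N + K) from Finset.sum_range_succ _ _]
      linarith [hd0 (N + K)]
    set C : ℝ := dist (z N) y with hCdef
    have hzny : ∀ n, N ≤ n → z n ≠ y := by
      intro n hn h
      have h2 := hN n hn
      rw [h, hv, EReal.coe_lt_coe_iff] at h2
      linarith
    have hC : 0 < C := dist_pos.2 (hzny N le_rfl)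
    -- key pointwise bound
    have key : ∀ M : ℕ,
        ENNReal.ofReal (δ * (Real.log (C + S (M + 1)) - Real.log (C + S M))) ≤
          globalSlope f (z (N + M)) * ENNReal.ofReal (d (N + M)) := by
      intro M
      have hCSM : 0 < C + S M := by have := hS0 M; linarith
      have hSsucc : S (M + 1) = S M + d (N + M) := Finset.sum_range_succ _ _
      have hlog : Real.log (C + S (M + 1)) - Real.log (C + S M) ≤ d (N + M) / (C + S M) := by
        rw [hSsucc]
        have hx : (0:ℝ) < C + (S M + d (N + M)) := by linarith [hd0 (N + M)]
        have h1 : Real.log ((C + (S M + d (N + M))) / (C + S M)) ≤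
            (C + (S M + d (N + M))) / (C + S M) - 1 :=
          Real.log_le_sub_one_of_pos (by positivity)
        rw [Real.log_div (ne_of_gt hx) (ne_of_gt hCSM)] at h1
        have h2 : (C + (S M + d (N + M))) / (C + S M) - 1 = d (N + M) / (C + S M) := by
          field_simp
          ring
        linarith
      have step1 : ENNReal.ofReal (δ * (Real.log (C + S (M + 1)) - Real.log (C + S M))) ≤
          ENNReal.ofReal (δ / (C + S M) * d (N + M)) := by
        apply ENNReal.ofReal_le_ofReal
        have h3 : δ / (C + S M) * d (N + M) = δ * (d (N + M) / (C + S M)) := by ring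
        rw [h3]
        exact mul_le_mul_of_nonneg_left hlog (le_of_lt hδ)
      rcases eq_or_lt_of_le (hd0 (N + M)) with hdz | hdz
      · have h4 : S (M + 1) = S M := by rw [hSsucc, ← hdz, add_zero]
        rw [h4]
        simp
      by_cases hft : f (z (N + M)) = ⊤
      · have h5 : globalSlope f (z (N + M)) = ⊤ := by rw [globalSlope, if_pos hft]
        rw [h5, ENNReal.top_mul
          (by simp only [ne_eq, ENNReal.ofReal_eq_zero, not_le]; exact hdz)]
        exact le_top
      · have hn : N ≤ N + M := Nat.le_add_right _ _
        set r : ℝ := (f (z (N + M))).toReal with hrdef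
        have hr : f (z (N + M)) = (r : EReal) := (EReal.coe_toReal hft (hbot _)).symm
        have hrc : c < r := by
          have h6 := hN _ hn
          rwa [hr, EReal.coe_lt_coe_iff] at h6
        have hdisty : 0 < dist (z (N + M)) y := dist_pos.2 (hzny _ hn)
        have hdistle : dist (z (N + M)) y ≤ C + S M := by
          have h1 : dist (z (N + M)) (z N) ≤ S M := by
            have h7 := dist_le_range_sum_dist (fun i => z (N + i)) M
            simp only [add_zero] at h7
            calc dist (z (N + M)) (z N) = dist (z N) (z (N + M)) := dist_comm _ _
              _ ≤ ∑ i ∈ Finset.range M, dist (z (N + i)) (z (N + (i + 1))) := h7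
              _ = S M := by
                  refine Finset.sum_congr rfl fun i _ => ?_
                  show dist (z (N + i)) (z (N + (i + 1))) = dist (z (N + i)) (z (N + i + 1))
                  rw [add_assoc]
          calc dist (z (N + M)) y ≤ dist (z (N + M)) (z N) + dist (z N) y := dist_triangle _ _ _
            _ ≤ S M + C := add_le_add h1 le_rfl
            _ = C + S M := add_comm _ _
        have hnum : δ ≤ (max (f (z (N + M)) - f y) 0).toReal := by
          rw [hr, hv, ← EReal.coe_sub]
          have hrv : δ ≤ r - v := by linarith
          have h0 : (0 : EReal) ≤ ((r - v : ℝ) : EReal) := by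
            exact_mod_cast (by linarith : (0:ℝ) ≤ r - v)
          rw [max_eq_left h0, EReal.toReal_coe]
          exact hrv
        have hslope : ENNReal.ofReal (δ / (C + S M)) ≤ globalSlope f (z (N + M)) := by
          rw [globalSlope, if_neg hft]
          refine le_trans (ENNReal.ofReal_le_ofReal ?_)
            (le_iSup (fun w => ENNReal.ofReal
              ((max (f (z (N + M)) - f w) 0).toReal / dist (z (N + M)) w)) y)
          exact div_le_div₀ (le_trans hδ.le hnum) hnum hdisty hdistle
        calc ENNReal.ofReal (δ * (Real.log (C + S (M + 1)) - Real.log (C + S M)))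
            ≤ ENNReal.ofReal (δ / (C + S M) * d (N + M)) := step1
          _ = ENNReal.ofReal (δ / (C + S M)) * ENNReal.ofReal (d (N + M)) :=
              ENNReal.ofReal_mul (by positivity)
          _ ≤ globalSlope f (z (N + M)) * ENNReal.ofReal (d (N + M)) :=
              mul_le_mul_left hslope _
    -- partial sums bound
    set B : ℝ := (∑' n, globalSlope f (z n) * ENNReal.ofReal (dist (z n) (z (n + 1)))).toReal
      with hBdef
    have hbound : ∀ K, δ * (Real.log (C + S K) - Real.log C) ≤ B := by
      intro K
      refine (ENNReal.ofReal_le_iff_le_toReal hsum).1 ?_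
      have hlogmono : ∀ M ∈ Finset.range K,
          (0:ℝ) ≤ δ * (Real.log (C + S (M + 1)) - Real.log (C + S M)) := by
        intro M _
        have h8 : Real.log (C + S M) ≤ Real.log (C + S (M + 1)) := by
          apply Real.log_le_log (by have := hS0 M; linarith)
          linarith [hSmono M]
        have := hδ.le
        nlinarith
      have heq : ENNReal.ofReal (δ * (Real.log (C + S K) - Real.log C)) =
          ∑ M ∈ Finset.range K,
            ENNReal.ofReal (δ * (Real.log (C + S (M + 1)) - Real.log (C + S M))) := by
        rw [← ENNReal.ofReal_sum_of_nonneg hlogmono]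
        congr 1
        rw [← Finset.mul_sum, Finset.sum_range_sub (fun M => Real.log (C + S M))]
        have hS00 : S 0 = 0 := Finset.sum_range_zero _
        rw [hS00, add_zero]
      rw [heq]
      calc ∑ M ∈ Finset.range K,
            ENNReal.ofReal (δ * (Real.log (C + S (M + 1)) - Real.log (C + S M)))
          ≤ ∑ M ∈ Finset.range K,
              globalSlope f (z (N + M)) * ENNReal.ofReal (d (N + M)) :=
            Finset.sum_le_sum fun M _ => key M
        _ = ∑ n ∈ (Finset.range K).image (fun M => N + M),
              globalSlope f (z n) * ENNReal.ofReal (d n) :=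
            (Finset.sum_image (f := fun n => globalSlope f (z n) * ENNReal.ofReal (d n))
              (g := fun M => N + M) (s := Finset.range K)
              (fun a _ b _ h => Nat.add_left_cancel h)).symm
        _ ≤ ∑' n, globalSlope f (z n) * ENNReal.ofReal (d n) := ENNReal.sum_le_tsum _
        _ = ∑' n, globalSlope f (z n) * ENNReal.ofReal (dist (z n) (z (n + 1))) := rfl
    -- divergence gives a K contradicting hbound
    have hdiv : Tendsto (fun M => ∑ i ∈ Finset.range M, d i) atTop atTop :=
      (not_summable_iff_tendsto_nat_atTop_of_nonneg hd0).1 hS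
    set T : ℝ := C * Real.exp (B / δ) with hTdef
    have hT : 0 < T := by positivity
    obtain ⟨m0, hm0⟩ := (hdiv.eventually_ge_atTop ((∑ i ∈ Finset.range N, d i) + T)).exists_forall_of_atTop
    have hSK : T ≤ S m0 := by
      have h9 := hm0 (N + m0) (Nat.le_add_left _ _)
      have h10 : ∑ i ∈ Finset.range (N + m0), d i =
          (∑ i ∈ Finset.range N, d i) + S m0 := Finset.sum_range_add d N m0
      rw [h10] at h9
      linarith
    have hlogT : Real.log T < Real.log (C + S m0) := by
      apply Real.log_lt_log hT
      linarith
    have hlogT2 : Real.log T = Real.log C + B / δ := by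
      rw [hTdef, Real.log_mul (ne_of_gt hC) (Real.exp_ne_zero _), Real.log_exp]
    have hfinal : B < δ * (Real.log (C + S m0) - Real.log C) := by
      have h11 : B / δ < Real.log (C + S m0) - Real.log C := by linarith
      calc B = δ * (B / δ) := by field_simp
        _ < δ * (Real.log (C + S m0) - Real.log C) := by
            exact mul_lt_mul_of_pos_left h11 hδ
    linarith [hbound m0]
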